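/- Let n ≥ 2. Every HV-palindrome w of size (3,n) has at most 3n distinct nonempty HV-palindromic factors; moreover, for distinct letters a ≠ b, the word a^n ⊖ b^n ⊖ a^n of size (3,n) (first and third rows constant a, middle row constant b) is an HV-palindrome with exactly 3n distinct nonempty HV-palindromic factors. -/

import Mathlib

/-- A finite 2D word over `A`: a pair of dimensions together with a matrix of letters. -/
def Word2D (A : Type*) := (k : ℕ) × (l : ℕ) × (Fin k → Fin l → A)

/-- A 2D word `w` is a 2D palindrome if it equals its reverse. -/
def IsPal2D {A : Type*} {m n : ℕ} (w : Fin m → Fin n → A) : Prop :=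
  ∀ i j, w i j = w i.rev j.rev

/-- A 2D word is an HV-palindrome if every row and every column is a palindrome. -/
def IsHVPal {A : Type*} {m n : ℕ} (w : Fin m → Fin n → A) : Prop :=
  (∀ i j, w i j = w i j.rev) ∧ (∀ i j, w i j = w i.rev j)

/-- `p` is a factor (sub-array) of `w`. -/
def IsFactor {A : Type*} {k l m n : ℕ} (p : Fin k → Fin l → A)
    (w : Fin m → Fin n → A) : Prop :=
  ∃ r c, ∃ (h1 : r + k ≤ m) (h2 : c + l ≤ n),
    ∀ (i : Fin k) (j : Fin l),
      p i j = w ⟨r + i, by have := i.isLt; omega⟩ ⟨c + j, by have := j.isLt; omega⟩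

/-- The set of distinct nonempty HV-palindromic factors of `w`. -/
def HVFactors {A : Type*} {m n : ℕ} (w : Fin m → Fin n → A) : Set (Word2D A) :=
  {p | 0 < p.1 ∧ 0 < p.2.1 ∧ IsHVPal p.2.2 ∧ IsFactor p.2.2 w}

/-- The set of distinct nonempty 2D palindromic factors of `w`. -/
def PalFactors {A : Type*} {m n : ℕ} (w : Fin m → Fin n → A) : Set (Word2D A) :=
  {p | 0 < p.1 ∧ 0 < p.2.1 ∧ IsPal2D p.2.2 ∧ IsFactor p.2.2 w}

section Lists
variable {α : Type*}

/-- The set of nonempty palindromic factors of a list. -/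
def PalSet (s : List α) : Set (List α) := {p | p ≠ [] ∧ p.reverse = p ∧ p <:+: s}

lemma palSet_finite (s : List α) : (PalSet s).Finite := by
  apply Set.Finite.subset s.sublists.finite_toSet
  intro p hp
  simp only [Set.mem_setOf_eq, List.mem_sublists]
  exact hp.2.2.sublist

/-- Droubay–Justin–Pirillo: a word of length `m` has at most `m` nonempty palindromic
factors. -/
lemma palSet_ncard (s : List α) : (PalSet s).ncard ≤ s.length := by
  classical
  have hex : ∀ p ∈ PalSet s, ∃ e, e ≤ s.length ∧ p <:+ s.take e := by
    intro p hp
    obtain ⟨q, t, hqt⟩ := hp.2.2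
    refine ⟨q.length + p.length, ?_, ?_⟩
    · have := congrArg List.length hqt
      simp at this; omega
    · have hts : s.take (q.length + p.length) = q ++ p := by
        rw [← hqt]
        exact List.take_left' (by simp)
      rw [hts]; exact List.suffix_append q p
  have hex' : ∀ p ∈ PalSet s, ∃ e, p <:+ s.take e :=
    fun p hp => (hex p hp).imp (fun _ h => h.2)
  set f : List α → ℕ := fun p => if h : ∃ e, p <:+ s.take e then Nat.find h else 0 with hf
  have hfspec : ∀ p ∈ PalSet s, p <:+ s.take (f p) := by
    intro p hp
    simp only [hf, dif_pos (hex' p hp)]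
    exact Nat.find_spec (hex' p hp)
  have hfmin : ∀ p ∈ PalSet s, ∀ m, p <:+ s.take m → f p ≤ m := by
    intro p hp m hm
    simp only [hf, dif_pos (hex' p hp)]
    exact Nat.find_min' _ hm
  have hfle : ∀ p ∈ PalSet s, f p ≤ s.length := by
    intro p hp
    obtain ⟨e, he1, he2⟩ := hex p hp
    exact (hfmin p hp e he2).trans he1
  have hfpos : ∀ p ∈ PalSet s, 1 ≤ f p := by
    intro p hp
    by_contra hcon
    have h0 : f p = 0 := by omega
    have := hfspec p hp
    rw [h0] at this
    simp only [List.take_zero, List.suffix_nil] at this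
    exact hp.1 this
  have key : ∀ p ∈ PalSet s, ∀ p' ∈ PalSet s, f p = f p' → p.length ≤ p'.length → p = p' := by
    intro p hp p' hp' hfeq hlen
    have h1 : p <:+ s.take (f p') := hfeq ▸ hfspec p hp
    have h2 : p' <:+ s.take (f p') := hfspec p' hp'
    have hpp' : p <+: p' := by
      have := List.prefix_of_prefix_length_le (List.reverse_prefix.2 h1)
        (List.reverse_prefix.2 h2) (by simpa using hlen)
      rwa [hp.2.1, hp'.2.1] at this
    rcases eq_or_lt_of_le hlen with hEq | hlt
    · exact hpp'.eq_of_length hEq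
    · exfalso
      obtain ⟨t, ht⟩ := hpp'
      obtain ⟨q, hq⟩ := h2
      have hm : p <:+ s.take (q.length + p.length) := by
        have h3 : (s.take (f p')).take (q.length + p.length) = q ++ p := by
          rw [← hq, ← ht, ← List.append_assoc]
          exact List.take_left' (by simp)
        have hlenle : q.length + p.length + t.length ≤ f p' := by
          have hlq := congrArg List.length hq
          have hlt' := congrArg List.length ht
          simp only [List.length_append, List.length_take] at hlq hlt'
          omega
        have h4 : s.take (q.length + p.length) = q ++ p := by
          rw [← h3, List.take_take]
          congr 1
          have ht0 : 0 < t.length := by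
            rcases Nat.eq_zero_or_pos t.length with h0 | h0
            · exfalso
              have hte : t = [] := List.length_eq_zero_iff.1 h0
              subst hte
              simp only [List.append_nil] at ht
              have := congrArg List.length ht
              omega
            · exact h0
          omega
        rw [h4]; exact List.suffix_append q p
      have hlt2 : q.length + p.length < f p' := by
        have hlq := congrArg List.length hq
        have hlt' := congrArg List.length ht
        simp only [List.length_append, List.length_take] at hlq hlt'
        omega
      have := hfmin p hp (q.length + p.length) hm
      omega
  have hinj : Set.InjOn f (PalSet s) := by
    intro p hp p' hp' hfe
    rcases le_total p.length p'.length with h | h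
    · exact key p hp p' hp' hfe h
    · exact (key p' hp' p hp hfe.symm h).symm
  calc (PalSet s).ncard = (f '' PalSet s).ncard := (Set.ncard_image_of_injOn hinj).symm
    _ ≤ ((Finset.Icc 1 s.length : Finset ℕ) : Set ℕ).ncard := by
        apply Set.ncard_le_ncard ?_ (Finset.finite_toSet _)
        rintro x ⟨p, hp, rfl⟩
        simp only [Finset.coe_Icc, Set.mem_Icc]
        exact ⟨hfpos p hp, hfle p hp⟩
    _ = s.length := by rw [Set.ncard_coe_finset, Nat.card_Icc]; omega

lemma window_infix {n l c : ℕ} (f : Fin n → α) (h : c + l ≤ n) :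
    List.ofFn (fun j : Fin l => f ⟨c + j.val, by have := j.isLt; omega⟩) <:+: List.ofFn f := by
  have key : List.ofFn (fun j : Fin l => f ⟨c + j.val, by have := j.isLt; omega⟩)
      = ((List.ofFn f).drop c).take l := by
    apply List.ext_getElem
    · simp; omega
    · intro i h1 h2
      simp [List.getElem_take, List.getElem_drop, List.getElem_ofFn]
  rw [key]
  exact ((List.take_prefix _ _).isInfix).trans ((List.drop_suffix _ _).isInfix)

lemma ofFn_pal {n : ℕ} (f : Fin n → α) (h : ∀ j, f j = f j.rev) :
    (List.ofFn f).reverse = List.ofFn f := by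
  apply List.ext_getElem (by simp)
  intro i h1 h2
  rw [List.getElem_reverse]
  simp only [List.getElem_ofFn]
  have hi : i < n := by simpa using h2
  have := h ⟨i, hi⟩
  rw [this]
  congr 1
  apply Fin.ext
  simp [Fin.val_rev]
  omega

lemma mem_palSet_window {n l c : ℕ} (f : Fin n → α) (g : Fin l → α) (hl : 0 < l)
    (hcl : c + l ≤ n) (hpal : ∀ j, g j = g j.rev)
    (hg : ∀ j : Fin l, g j = f ⟨c + j.val, by have := j.isLt; omega⟩) :
    List.ofFn g ∈ PalSet (List.ofFn f) := by
  refine ⟨by simp only [ne_eq, List.ofFn_eq_nil_iff]; omega, ofFn_pal g hpal, ?_⟩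
  have hh : List.ofFn g = List.ofFn (fun j : Fin l => f ⟨c + j.val, by have := j.isLt; omega⟩) :=
    congrArg _ (funext hg)
  rw [hh]
  exact window_infix f hcl

end Lists

section Part1
variable {A : Type*}

/-- The first row of a 2D word, as a list. -/
def wrow0 (q : Word2D A) : List A :=
  if h : 0 < q.1 then List.ofFn (fun j => q.2.2 ⟨0, h⟩ j) else []

/-- The first two rows of a 2D word, zipped, as a list of pairs. -/
def wrow01 (q : Word2D A) : List (A × A) :=
  if h : 1 < q.1 then List.ofFn (fun j => (q.2.2 ⟨0, by omega⟩ j, q.2.2 ⟨1, h⟩ j)) else []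

lemma wrow0_mk {k l : ℕ} (hk : 0 < k) (f : Fin k → Fin l → A) :
    wrow0 (⟨k, l, f⟩ : Word2D A) = List.ofFn (fun j => f ⟨0, hk⟩ j) := dif_pos hk

lemma wrow01_mk {k l : ℕ} (hk : 1 < k) (f : Fin k → Fin l → A) :
    wrow01 (⟨k, l, f⟩ : Word2D A)
      = List.ofFn (fun j => (f ⟨0, by omega⟩ j, f ⟨1, hk⟩ j)) := dif_pos hk

lemma word2d_mk_inj {k l : ℕ} {f g : Fin k → Fin l → A}
    (h : (⟨k, l, f⟩ : Word2D A) = ⟨k, l, g⟩) : f = g := by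
  have h' : (⟨k, ⟨l, f⟩⟩ : (k : ℕ) × (l : ℕ) × (Fin k → Fin l → A)) = ⟨k, ⟨l, g⟩⟩ := h
  injection h' with h1 h2
  injection h2 with h4 h5

theorem part1 {n : ℕ} (w : Fin 3 → Fin n → A) (hw : IsHVPal w) :
    (HVFactors w).ncard ≤ 3 * n := by
  classical
  set u : Fin n → A := fun j => w ⟨0, by omega⟩ j with hu
  set v : Fin n → A := fun j => w ⟨1, by omega⟩ j with hv
  set z : Fin n → A × A := fun j => (u j, v j) with hz
  have h20 : ∀ (h2 : (2:ℕ) < 3) j, w ⟨2, h2⟩ j = w ⟨0, by omega⟩ j := by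
    intro h2 j
    have h := hw.2 ⟨0, by omega⟩ j
    rw [show (Fin.rev (⟨0, by omega⟩ : Fin 3)) = ⟨2, h2⟩ from rfl] at h
    exact h.symm
  set S1 : Set (Word2D A) := {q | q ∈ HVFactors w ∧ q.1 = 1} with hS1
  set S2 : Set (Word2D A) := {q | q ∈ HVFactors w ∧ q.1 = 2} with hS2
  set S3 : Set (Word2D A) := {q | q ∈ HVFactors w ∧ q.1 = 3} with hS3
  have hsplit : HVFactors w = (S1 ∪ S2) ∪ S3 := by
    ext q
    constructor
    · intro hq
      obtain ⟨hk, hl, hHV, r, c, h1, h2, hfac⟩ := hq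
      have : q.1 = 1 ∨ q.1 = 2 ∨ q.1 = 3 := by omega
      rcases this with h | h | h
      · exact Or.inl (Or.inl ⟨⟨hk, hl, hHV, r, c, h1, h2, hfac⟩, h⟩)
      · exact Or.inl (Or.inr ⟨⟨hk, hl, hHV, r, c, h1, h2, hfac⟩, h⟩)
      · exact Or.inr ⟨⟨hk, hl, hHV, r, c, h1, h2, hfac⟩, h⟩
    · rintro ((⟨h, -⟩ | ⟨h, -⟩) | ⟨h, -⟩) <;> exact h
  -- images
  have im1 : wrow0 '' S1 ⊆ PalSet (List.ofFn u) ∪ PalSet (List.ofFn v) := by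
    rintro x ⟨⟨k, l, f⟩, ⟨⟨hk, hl, hHV, r, c, h1, h2, hfac⟩, hk1⟩, rfl⟩
    dsimp only at hk1 hl hHV hfac h1 h2
    subst hk1
    rw [wrow0_mk one_pos]
    have hr : r = 0 ∨ r = 1 ∨ r = 2 := by omega
    rcases hr with rfl | rfl | rfl
    · exact Or.inl (mem_palSet_window u _ hl h2 (fun j => hHV.1 ⟨0, one_pos⟩ j)
        (fun j => hfac ⟨0, one_pos⟩ j))
    · exact Or.inr (mem_palSet_window v _ hl h2 (fun j => hHV.1 ⟨0, one_pos⟩ j)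
        (fun j => hfac ⟨0, one_pos⟩ j))
    · refine Or.inl (mem_palSet_window u _ hl h2 (fun j => hHV.1 ⟨0, one_pos⟩ j) ?_)
      intro j
      rw [hfac ⟨0, one_pos⟩ j]
      exact h20 _ _
  have im2 : wrow0 '' S2 ⊆ PalSet (List.ofFn u) ∩ PalSet (List.ofFn v) := by
    rintro x ⟨⟨k, l, f⟩, ⟨⟨hk, hl, hHV, r, c, h1, h2, hfac⟩, hk2⟩, rfl⟩
    dsimp only at hk2 hl hHV hfac h1 h2
    subst hk2
    rw [wrow0_mk two_pos]
    have hrow : ∀ j, f ⟨0, two_pos⟩ j = f ⟨1, one_lt_two⟩ j := by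
      intro j
      have h := hHV.2 ⟨0, two_pos⟩ j
      rwa [show (Fin.rev (⟨0, two_pos⟩ : Fin 2)) = ⟨1, one_lt_two⟩ from rfl] at h
    have hr : r = 0 ∨ r = 1 := by omega
    constructor
    · refine mem_palSet_window u _ hl h2 (fun j => hHV.1 ⟨0, two_pos⟩ j) ?_
      intro j
      rcases hr with rfl | rfl
      · exact hfac ⟨0, two_pos⟩ j
      · rw [hrow j, hfac ⟨1, one_lt_two⟩ j]
        exact h20 _ _
    · refine mem_palSet_window v _ hl h2 (fun j => hHV.1 ⟨0, two_pos⟩ j) ?_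
      intro j
      rcases hr with rfl | rfl
      · rw [hrow j]
        exact hfac ⟨1, one_lt_two⟩ j
      · exact hfac ⟨0, two_pos⟩ j
  have im3 : wrow01 '' S3 ⊆ PalSet (List.ofFn z) := by
    rintro x ⟨⟨k, l, f⟩, ⟨⟨hk, hl, hHV, r, c, h1, h2, hfac⟩, hk3⟩, rfl⟩
    dsimp only at hk3 hl hHV hfac h1 h2
    subst hk3
    have hr : r = 0 := by omega
    subst hr
    rw [wrow01_mk (by omega)]
    refine mem_palSet_window z _ hl h2 ?_ ?_
    · intro j
      exact Prod.ext (hHV.1 ⟨0, by omega⟩ j) (hHV.1 ⟨1, by omega⟩ j)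
    · intro j
      exact Prod.ext (hfac ⟨0, by omega⟩ j) (hfac ⟨1, by omega⟩ j)
  -- injectivity
  have inj1 : Set.InjOn wrow0 S1 := by
    rintro ⟨k, l, f⟩ ⟨hmem, hk1⟩ ⟨k', l', f'⟩ ⟨hmem', hk1'⟩ heq
    dsimp only at hk1 hk1'
    subst hk1; subst hk1'
    rw [wrow0_mk one_pos, wrow0_mk one_pos] at heq
    have hll : l = l' := by
      have := congrArg List.length heq
      simpa using this
    subst hll
    have hf0 := List.ofFn_injective heq
    have hff : f = f' := by
      funext i j
      have hi : i = ⟨0, one_pos⟩ := Subsingleton.elim _ _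
      rw [hi]
      exact congrFun hf0 j
    rw [hff]
  have inj2 : Set.InjOn wrow0 S2 := by
    rintro ⟨k, l, f⟩ ⟨hmem, hk2⟩ ⟨k', l', f'⟩ ⟨hmem', hk2'⟩ heq
    dsimp only at hk2 hk2'
    subst hk2; subst hk2'
    rw [wrow0_mk two_pos, wrow0_mk two_pos] at heq
    have hll : l = l' := by
      have := congrArg List.length heq
      simpa using this
    subst hll
    have hf0 := List.ofFn_injective heq
    obtain ⟨-, -, hHV, -⟩ := hmem
    obtain ⟨-, -, hHV', -⟩ := hmem'
    have hrow : ∀ j, f ⟨0, two_pos⟩ j = f ⟨1, one_lt_two⟩ j := by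
      intro j
      have h := hHV.2 ⟨0, two_pos⟩ j
      rwa [show (Fin.rev (⟨0, two_pos⟩ : Fin 2)) = ⟨1, one_lt_two⟩ from rfl] at h
    have hrow' : ∀ j, f' ⟨0, two_pos⟩ j = f' ⟨1, one_lt_two⟩ j := by
      intro j
      have h := hHV'.2 ⟨0, two_pos⟩ j
      rwa [show (Fin.rev (⟨0, two_pos⟩ : Fin 2)) = ⟨1, one_lt_two⟩ from rfl] at h
    have hff : f = f' := by
      funext i j
      obtain ⟨iv, hiv⟩ := i
      interval_cases iv
      · exact congrFun hf0 j
      · rw [← hrow j, ← hrow' j]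
        exact congrFun hf0 j
    rw [hff]
  have inj3 : Set.InjOn wrow01 S3 := by
    rintro ⟨k, l, f⟩ ⟨hmem, hk3⟩ ⟨k', l', f'⟩ ⟨hmem', hk3'⟩ heq
    dsimp only at hk3 hk3'
    subst hk3; subst hk3'
    rw [wrow01_mk (by omega), wrow01_mk (by omega)] at heq
    have hll : l = l' := by
      have := congrArg List.length heq
      simpa using this
    subst hll
    have hf0 := List.ofFn_injective heq
    obtain ⟨-, -, hHV, -⟩ := hmem
    obtain ⟨-, -, hHV', -⟩ := hmem'
    have c0 : ∀ j, f ⟨0, by omega⟩ j = f' ⟨0, by omega⟩ j :=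
      fun j => congrArg Prod.fst (congrFun hf0 j)
    have c1 : ∀ j, f ⟨1, by omega⟩ j = f' ⟨1, by omega⟩ j :=
      fun j => congrArg Prod.snd (congrFun hf0 j)
    have hrow : ∀ j, f ⟨0, by omega⟩ j = f ⟨2, by omega⟩ j := by
      intro j
      have h := hHV.2 (⟨0, by omega⟩ : Fin 3) j
      rwa [show (Fin.rev (⟨0, by omega⟩ : Fin 3)) = ⟨2, by omega⟩ from rfl] at h
    have hrow' : ∀ j, f' ⟨0, by omega⟩ j = f' ⟨2, by omega⟩ j := by
      intro j
      have h := hHV'.2 (⟨0, by omega⟩ : Fin 3) j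
      rwa [show (Fin.rev (⟨0, by omega⟩ : Fin 3)) = ⟨2, by omega⟩ from rfl] at h
    have hff : f = f' := by
      funext i j
      obtain ⟨iv, hiv⟩ := i
      interval_cases iv
      · exact c0 j
      · exact c1 j
      · rw [← hrow j, ← hrow' j]
        exact c0 j
    rw [hff]
  -- counting
  have b1 : S1.ncard ≤ (PalSet (List.ofFn u) ∪ PalSet (List.ofFn v)).ncard := by
    rw [← Set.ncard_image_of_injOn inj1]
    exact Set.ncard_le_ncard im1 ((palSet_finite _).union (palSet_finite _))
  have b2 : S2.ncard ≤ (PalSet (List.ofFn u) ∩ PalSet (List.ofFn v)).ncard := by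
    rw [← Set.ncard_image_of_injOn inj2]
    exact Set.ncard_le_ncard im2 ((palSet_finite _).inter_of_left _)
  have b3 : S3.ncard ≤ (PalSet (List.ofFn z)).ncard := by
    rw [← Set.ncard_image_of_injOn inj3]
    exact Set.ncard_le_ncard im3 (palSet_finite _)
  have hun := Set.ncard_union_add_ncard_inter (PalSet (List.ofFn u)) (PalSet (List.ofFn v))
    (palSet_finite _) (palSet_finite _)
  have e1 : (PalSet (List.ofFn u)).ncard ≤ n := by
    have := palSet_ncard (List.ofFn u); simpa using this
  have e2 : (PalSet (List.ofFn v)).ncard ≤ n := by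
    have := palSet_ncard (List.ofFn v); simpa using this
  have e3 : (PalSet (List.ofFn z)).ncard ≤ n := by
    have := palSet_ncard (List.ofFn z); simpa using this
  have c1 : (HVFactors w).ncard ≤ (S1 ∪ S2).ncard + S3.ncard := by
    rw [hsplit]; exact Set.ncard_union_le _ _
  have c2 : (S1 ∪ S2).ncard ≤ S1.ncard + S2.ncard := Set.ncard_union_le _ _
  omega

end Part1

section Part2
variable {A : Type*}

lemma word2d_fst {k l k' l' : ℕ} {f : Fin k → Fin l → A} {f' : Fin k' → Fin l' → A}
    (h : (⟨k, l, f⟩ : Word2D A) = ⟨k', l', f'⟩) : k = k' :=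
  congrArg (fun q : Word2D A => q.1) h

lemma word2d_snd {k l k' l' : ℕ} {f : Fin k → Fin l → A} {f' : Fin k' → Fin l' → A}
    (h : (⟨k, l, f⟩ : Word2D A) = ⟨k', l', f'⟩) : l = l' :=
  congrArg (fun q : Word2D A => q.2.1) h

/-- The enumeration of the HV-palindromic factors of `aⁿ ⊖ bⁿ ⊖ aⁿ`. -/
def Fmap (n : ℕ) (a b : A) : Fin n × Fin 3 → Word2D A := fun x =>
  if x.2.val = 0 then ⟨1, x.1.val + 1, fun _ _ => a⟩
  else if x.2.val = 1 then ⟨1, x.1.val + 1, fun _ _ => b⟩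
  else ⟨3, x.1.val + 1, fun i _ => if i = 1 then b else a⟩

lemma Fmap_0 {n : ℕ} (a b : A) (m : Fin n) {t : Fin 3} (ht : t.val = 0) :
    Fmap n a b (m, t) = ⟨1, m.val + 1, fun _ _ => a⟩ := by simp [Fmap, ht]; rfl

lemma Fmap_1 {n : ℕ} (a b : A) (m : Fin n) {t : Fin 3} (ht : t.val = 1) :
    Fmap n a b (m, t) = ⟨1, m.val + 1, fun _ _ => b⟩ := by simp [Fmap, ht]; rfl

lemma Fmap_2 {n : ℕ} (a b : A) (m : Fin n) {t : Fin 3} (ht : t.val = 2) :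
    Fmap n a b (m, t) = ⟨3, m.val + 1, fun i _ => if i = 1 then b else a⟩ := by
  simp [Fmap, ht]; rfl

theorem part2_pal {n : ℕ} (a b : A) :
    IsHVPal (fun (i : Fin 3) (_ : Fin n) => if i = 1 then b else a) := by
  refine ⟨fun i j => rfl, fun i j => ?_⟩
  show (if i = 1 then b else a) = (if i.rev = 1 then b else a)
  fin_cases i <;> rfl

theorem part2_count {n : ℕ} (a b : A) (hab : a ≠ b) :
    (HVFactors (fun (i : Fin 3) (_ : Fin n) => if i = 1 then b else a)).ncard = 3 * n := by
  classical
  have Wval : ∀ (x : ℕ) (hx : x < 3) (j : Fin n),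
      (fun (i : Fin 3) (_ : Fin n) => if i = 1 then b else a) ⟨x, hx⟩ j
        = if x = 1 then b else a := by
    intro x hx j
    show (if (⟨x, hx⟩ : Fin 3) = 1 then b else a) = if x = 1 then b else a
    by_cases hx1 : x = 1
    · rw [if_pos (by apply Fin.ext; simpa using hx1), if_pos hx1]
    · rw [if_neg (fun hc => hx1 (by simpa using congrArg Fin.val hc)), if_neg hx1]
  have hrange : HVFactors (fun (i : Fin 3) (_ : Fin n) => if i = 1 then b else a)
      = Set.range (Fmap n a b) := by
    ext q
    constructor
    · rintro ⟨hk, hl, hHV, r, c, h1, h2, hfac⟩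
      obtain ⟨k, l, f⟩ := q
      dsimp only at hk hl hHV hfac h1 h2
      have hln : l ≤ n := by omega
      obtain ⟨m, rfl⟩ : ∃ m, l = m + 1 := ⟨l - 1, by omega⟩
      have hval : ∀ (i : Fin k) (j : Fin (m+1)),
          f i j = if r + i.val = 1 then b else a := by
        intro i j
        rw [hfac i j]
        by_cases h : r + i.val = 1
        · rw [if_pos (by apply Fin.ext; simpa using h), if_pos h]
        · rw [if_neg (fun hc => h (by simpa using congrArg Fin.val hc)), if_neg h]
      have hk3 : k ≤ 3 := by omega
      interval_cases k
      · by_cases hr1 : r = 1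
        · refine ⟨(⟨m, by omega⟩, ⟨1, by omega⟩), ?_⟩
          rw [Fmap_1 a b _ rfl]
          have hfb : f = fun _ _ => b := by
            funext i j
            rw [hval i j, if_pos (by have := i.isLt; omega)]
          rw [hfb]
        · refine ⟨(⟨m, by omega⟩, ⟨0, by omega⟩), ?_⟩
          rw [Fmap_0 a b _ rfl]
          have hfa : f = fun _ _ => a := by
            funext i j
            rw [hval i j, if_neg (by have := i.isLt; omega)]
          rw [hfa]
      · exfalso
        have hcol := hHV.2 (⟨0, by omega⟩ : Fin 2) (⟨0, by omega⟩ : Fin (m+1))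
        rw [show (Fin.rev (⟨0, by omega⟩ : Fin 2)) = ⟨1, by omega⟩ from rfl] at hcol
        have v0 : f ⟨0, by omega⟩ ⟨0, by omega⟩ = if r + 0 = 1 then b else a := hval _ _
        have v1 : f ⟨1, by omega⟩ ⟨0, by omega⟩ = if r + 1 = 1 then b else a := hval _ _
        have hr : r = 0 ∨ r = 1 := by omega
        rcases hr with rfl | rfl
        · rw [if_neg (by omega)] at v0
          rw [if_pos (by omega)] at v1
          exact hab ((v0.symm.trans hcol).trans v1)
        · rw [if_pos (by omega)] at v0
          rw [if_neg (by omega)] at v1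
          exact hab (((v0.symm.trans hcol).trans v1).symm)
      · refine ⟨(⟨m, by omega⟩, ⟨2, by omega⟩), ?_⟩
        rw [Fmap_2 a b _ rfl]
        have hr0 : r = 0 := by omega
        subst hr0
        have hff : f = fun (i : Fin 3) (_ : Fin (m+1)) => if i = 1 then b else a := by
          funext i j
          rw [hval i j]
          by_cases hi1 : i = 1
          · rw [if_pos (by subst hi1; rfl), if_pos hi1]
          · rw [if_neg (fun hc => hi1 (by apply Fin.ext; simp only [Fin.val_one]; omega)),
              if_neg hi1]
        rw [hff]
    · rintro ⟨⟨m, t⟩, rfl⟩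
      have ht3 := t.isLt
      have htc : t.val = 0 ∨ t.val = 1 ∨ t.val = 2 := by omega
      have hm := m.isLt
      rcases htc with ht | ht | ht
      · rw [Fmap_0 a b _ ht]
        show (0:ℕ) < 1 ∧ 0 < m.val + 1 ∧
          IsHVPal (fun (_ : Fin 1) (_ : Fin (m.val + 1)) => a) ∧
          IsFactor (fun (_ : Fin 1) (_ : Fin (m.val + 1)) => a)
            (fun (i : Fin 3) (_ : Fin n) => if i = 1 then b else a)
        refine ⟨by omega, by omega, ⟨fun i j => rfl, fun i j => rfl⟩,
          0, 0, by omega, by omega, ?_⟩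
        intro i j
        exact ((Wval (0 + i.val) (by have := i.isLt; omega)
          ⟨0 + j.val, by have := j.isLt; omega⟩).trans
          (if_neg (by have := i.isLt; omega))).symm
      · rw [Fmap_1 a b _ ht]
        show (0:ℕ) < 1 ∧ 0 < m.val + 1 ∧
          IsHVPal (fun (_ : Fin 1) (_ : Fin (m.val + 1)) => b) ∧
          IsFactor (fun (_ : Fin 1) (_ : Fin (m.val + 1)) => b)
            (fun (i : Fin 3) (_ : Fin n) => if i = 1 then b else a)
        refine ⟨by omega, by omega, ⟨fun i j => rfl, fun i j => rfl⟩,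
          1, 0, by omega, by omega, ?_⟩
        intro i j
        exact ((Wval (1 + i.val) (by have := i.isLt; omega)
          ⟨0 + j.val, by have := j.isLt; omega⟩).trans
          (if_pos (by have := i.isLt; omega))).symm
      · rw [Fmap_2 a b _ ht]
        show (0:ℕ) < 3 ∧ 0 < m.val + 1 ∧
          IsHVPal (fun (i : Fin 3) (_ : Fin (m.val + 1)) => if i = 1 then b else a) ∧
          IsFactor (fun (i : Fin 3) (_ : Fin (m.val + 1)) => if i = 1 then b else a)
            (fun (i : Fin 3) (_ : Fin n) => if i = 1 then b else a)
        refine ⟨by omega, by omega, part2_pal a b,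
          0, 0, by omega, by omega, ?_⟩
        intro i j
        have base := Wval (0 + i.val) (by have := i.isLt; omega)
          ⟨0 + j.val, by have := j.isLt; omega⟩
        by_cases hi : i = 1
        · have h1 : (0:ℕ) + i.val = 1 := by subst hi; rfl
          exact (if_pos hi).trans ((if_pos h1).symm.trans base.symm)
        · have h1 : ¬ ((0:ℕ) + i.val = 1) := by
            intro hc
            exact hi (by apply Fin.ext; simp only [Fin.val_one]; omega)
          exact (if_neg hi).trans ((if_neg h1).symm.trans base.symm)
  have hinj : Function.Injective (Fmap n a b) := by
    rintro ⟨xl, xt⟩ ⟨yl, yt⟩ h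
    have hx3 := xt.isLt
    have hy3 := yt.isLt
    have hxc : xt.val = 0 ∨ xt.val = 1 ∨ xt.val = 2 := by omega
    have hyc : yt.val = 0 ∨ yt.val = 1 ∨ yt.val = 2 := by omega
    rcases hxc with hx | hx | hx <;> rcases hyc with hy | hy | hy
    · rw [Fmap_0 a b _ hx, Fmap_0 a b _ hy] at h
      have hl := word2d_snd h
      have e1 : xl = yl := Fin.ext (by omega)
      have e2 : xt = yt := Fin.ext (by omega)
      rw [e1, e2]
    · rw [Fmap_0 a b _ hx, Fmap_1 a b _ hy] at h
      have hl := word2d_snd h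
      have hll : xl = yl := Fin.ext (by omega)
      subst hll
      exact absurd (congrFun (congrFun (word2d_mk_inj h) ⟨0, by omega⟩) ⟨0, by omega⟩) hab
    · rw [Fmap_0 a b _ hx, Fmap_2 a b _ hy] at h
      exact absurd (word2d_fst h) (by omega)
    · rw [Fmap_1 a b _ hx, Fmap_0 a b _ hy] at h
      have hl := word2d_snd h
      have hll : xl = yl := Fin.ext (by omega)
      subst hll
      exact absurd (congrFun (congrFun (word2d_mk_inj h) ⟨0, by omega⟩) ⟨0, by omega⟩).symm hab
    · rw [Fmap_1 a b _ hx, Fmap_1 a b _ hy] at h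
      have hl := word2d_snd h
      have e1 : xl = yl := Fin.ext (by omega)
      have e2 : xt = yt := Fin.ext (by omega)
      rw [e1, e2]
    · rw [Fmap_1 a b _ hx, Fmap_2 a b _ hy] at h
      exact absurd (word2d_fst h) (by omega)
    · rw [Fmap_2 a b _ hx, Fmap_0 a b _ hy] at h
      exact absurd (word2d_fst h) (by omega)
    · rw [Fmap_2 a b _ hx, Fmap_1 a b _ hy] at h
      exact absurd (word2d_fst h) (by omega)
    · rw [Fmap_2 a b _ hx, Fmap_2 a b _ hy] at h
      have hl := word2d_snd h
      have e1 : xl = yl := Fin.ext (by omega)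
      have e2 : xt = yt := Fin.ext (by omega)
      rw [e1, e2]
  rw [hrange, ← Set.image_univ, Set.ncard_image_of_injOn (hinj.injOn)]
  rw [Set.ncard_univ]
  simp [Nat.card_eq_fintype_card]
  ring

end Part2

/-- every HV-palindrome of size `(3,n)`, `n ≥ 2`, has at most `3n` distinct
nonempty HV-palindromic factors, and for distinct letters `a ≠ b`, the word
`aⁿ ⊖ bⁿ ⊖ aⁿ` is an HV-palindrome achieving exactly `3n`. -/
theorem stmt_17 {A : Type*} (n : ℕ) (hn : 2 ≤ n) :
    (∀ w : Fin 3 → Fin n → A, IsHVPal w → (HVFactors w).ncard ≤ 3 * n) ∧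
    (∀ a b : A, a ≠ b →
      IsHVPal (fun (i : Fin 3) (_ : Fin n) => if i = 1 then b else a) ∧
      (HVFactors (fun (i : Fin 3) (_ : Fin n) => if i = 1 then b else a)).ncard
        = 3 * n) := by
  exact ⟨fun w hw => part1 w hw, fun a b hab => ⟨part2_pal a b, part2_count a b hab⟩⟩
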